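/- Any quantum query algorithm (given by unitaries U_0,...,U_T on ℂ^N ⊗ ℂ^M and a fixed initial pure state) whose final states ρ^k_T under the p-faulty oracles O^k_p satisfy D(ρ^k_T, ρ^0_T) ≥ 9/10 in normalized trace distance for every k ∈ {1,...,N} must have T > (p/(10(1-p)))·N. -/

import Mathlib

open Matrix ComplexOrder Finset

/-- Outer product `|v⟩⟨v|`. -/
noncomputable def outer {n : Type*} [Fintype n] (v : n → ℂ) : Matrix n n ℂ :=
  Matrix.vecMulVec v (star v)

/-- The perfect Grover oracle `Ô^k = (I - 2|k⟩⟨k|) ⊗ I`. -/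
noncomputable def oracleHat {N M : ℕ} (k : Fin N) :
    Matrix (Fin N × Fin M) (Fin N × Fin M) ℂ :=
  Matrix.diagonal fun x => if x.1 = k then -1 else 1

/-- The `p`-faulty oracle channel `O^k_p(ρ) = (1-p)·Ô^k ρ Ô^{k†} + p·ρ`. -/
noncomputable def faultyOracle {N M : ℕ} (p : ℝ) (k : Fin N)
    (ρ : Matrix (Fin N × Fin M) (Fin N × Fin M) ℂ) :
    Matrix (Fin N × Fin M) (Fin N × Fin M) ℂ :=
  ((1 - p : ℝ) : ℂ) • (oracleHat k * ρ * (oracleHat k)ᴴ) + (p : ℂ) • ρ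

/-- Projection of a vector onto the subspace `|k⟩ ⊗ ℂ^M`, i.e. `|k, β_k⟩`. -/
def projVec {N M : ℕ} (k : Fin N) (v : Fin N × Fin M → ℂ) : Fin N × Fin M → ℂ :=
  fun x => if x.1 = k then v x else 0

/-- The positive semidefinite square root of a positive semidefinite matrix (the definition
`Matrix.PosSemidef.sqrt` of the older Mathlib, which has since been removed). -/
noncomputable def Matrix.PosSemidef.sqrt {n : Type*} [Fintype n] [DecidableEq n] {𝕜 : Type*}
    [RCLike 𝕜] {A : Matrix n n 𝕜} (hA : A.PosSemidef) : Matrix n n 𝕜 :=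
  hA.1.eigenvectorUnitary.1 * diagonal ((↑) ∘ (√·) ∘ hA.1.eigenvalues) *
  (star hA.1.eigenvectorUnitary : Matrix n n 𝕜)

/-- The trace norm (sum of singular values) of a complex matrix. -/
noncomputable def traceNorm {n : Type*} [Fintype n] [DecidableEq n]
    (A : Matrix n n ℂ) : ℝ :=
  ((Matrix.posSemidef_conjTranspose_mul_self A).sqrt.trace).re

namespace FG

set_option linter.unusedSectionVars false
set_option linter.unusedVariables false

variable {n : Type*} [Fintype n] [DecidableEq n]

/-- squared euclidean norm -/
noncomputable def nsq (v : n → ℂ) : ℝ := ∑ i, ‖v i‖ ^ 2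

lemma nsq_nonneg (v : n → ℂ) : 0 ≤ nsq v :=
  Finset.sum_nonneg fun i _ => sq_nonneg _

lemma star_dot_self (v : n → ℂ) : star v ⬝ᵥ v = (nsq v : ℂ) := by
  simp only [dotProduct, nsq, Pi.star_apply, Complex.ofReal_sum]
  refine Finset.sum_congr rfl fun i _ => ?_
  rw [Complex.star_def, ← Complex.normSq_eq_conj_mul_self, Complex.normSq_eq_norm_sq,
    Complex.ofReal_pow]

lemma dot_conj (u v : n → ℂ) : star v ⬝ᵥ u = starRingEnd ℂ (star u ⬝ᵥ v) := by
  simp only [dotProduct, map_sum, _root_.map_mul, Pi.star_apply, Complex.star_def,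
    Complex.conj_conj]
  exact Finset.sum_congr rfl fun i _ => mul_comm _ _

/-- Cauchy-Schwarz -/
lemma cs (u v : n → ℂ) : ‖star u ⬝ᵥ v‖ ≤ Real.sqrt (nsq u) * Real.sqrt (nsq v) := by
  have h := norm_inner_le_norm (𝕜 := ℂ) ((WithLp.equiv 2 (n → ℂ)).symm u)
    ((WithLp.equiv 2 (n → ℂ)).symm v)
  rw [show inner ℂ ((WithLp.equiv 2 (n → ℂ)).symm u) ((WithLp.equiv 2 (n → ℂ)).symm v)
      = star u ⬝ᵥ v by rw [dotProduct_comm]; rfl] at h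
  have hnorm : ∀ w : n → ℂ, ‖(WithLp.equiv 2 (n → ℂ)).symm w‖ = Real.sqrt (nsq w) := by
    intro w
    rw [EuclideanSpace.norm_eq]
    congr 1
  rwa [hnorm, hnorm] at h


lemma outer_apply (v : n → ℂ) (i j : n) : outer v i j = v i * starRingEnd ℂ (v j) := by
  simp [outer, vecMulVec_apply, Complex.star_def]

lemma outer_isHermitian (v : n → ℂ) : (outer v).IsHermitian := by
  ext i j
  simp [conjTranspose_apply, outer_apply, Complex.star_def, mul_comm]

lemma outer_mulVec (v w : n → ℂ) : outer v *ᵥ w = (star v ⬝ᵥ w) • v := by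
  ext i
  simp only [mulVec, dotProduct, outer_apply, Pi.smul_apply, smul_eq_mul, Finset.mul_sum,
    Pi.star_apply, Complex.star_def]
  rw [Finset.sum_mul]
  exact Finset.sum_congr rfl fun j _ => by ring

lemma outer_posSemidef (v : n → ℂ) : (outer v).PosSemidef := by
  refine PosSemidef.of_dotProduct_mulVec_nonneg (outer_isHermitian v) fun x => ?_
  rw [outer_mulVec, dotProduct_smul, smul_eq_mul, dot_conj v x, Complex.mul_conj]
  exact Complex.zero_le_real.2 (Complex.normSq_nonneg _)

lemma trace_outer (v : n → ℂ) : (outer v).trace = (nsq v : ℂ) := by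
  rw [← star_dot_self]
  simp only [trace, diag_apply, outer_apply, dotProduct, Pi.star_apply, Complex.star_def]
  exact Finset.sum_congr rfl fun i _ => mul_comm _ _

lemma outer_conj (M : Matrix n n ℂ) (v : n → ℂ) :
    M * outer v * Mᴴ = outer (M *ᵥ v) := by
  ext i j
  simp only [mul_apply, outer_apply, conjTranspose_apply, mulVec, dotProduct,
    Complex.star_def, Finset.sum_mul, Finset.mul_sum, map_sum, _root_.map_mul]
  exact Finset.sum_congr rfl fun a _ => Finset.sum_congr rfl fun b _ => by ring

lemma dot_outer_self (v x : n → ℂ) :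
    star x ⬝ᵥ (outer v *ᵥ x) = ((‖star v ⬝ᵥ x‖ ^ 2 : ℝ) : ℂ) := by
  rw [outer_mulVec, dotProduct_smul, smul_eq_mul, dot_conj v x, mul_comm,
    ← Complex.normSq_eq_conj_mul_self, Complex.normSq_eq_norm_sq,
    Complex.ofReal_pow]

lemma posSemidef_smul_real {A : Matrix n n ℂ} (hA : A.PosSemidef) {c : ℝ} (hc : 0 ≤ c) :
    ((c : ℂ) • A).PosSemidef := by
  refine PosSemidef.of_dotProduct_mulVec_nonneg ?_ fun x => ?_
  · unfold Matrix.IsHermitian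
    rw [conjTranspose_smul, hA.1.eq]
    congr 1
    simp [Complex.star_def, Complex.conj_ofReal]
  · rw [smul_mulVec, dotProduct_smul, smul_eq_mul]
    have h := hA.dotProduct_mulVec_nonneg x
    rw [Complex.nonneg_iff] at h ⊢
    constructor
    · simp only [Complex.mul_re, Complex.ofReal_re, Complex.ofReal_im, zero_mul, sub_zero]
      exact mul_nonneg hc h.1
    · simp only [Complex.mul_im, Complex.ofReal_re, Complex.ofReal_im, zero_mul, add_zero]
      rw [← h.2]
      ring


lemma trace_eq_sum_eigenvalues {A : Matrix n n ℂ} (hA : A.IsHermitian) :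
    A.trace = ∑ i, ((hA.eigenvalues i : ℝ) : ℂ) := by
  have hVV' : star (hA.eigenvectorUnitary : Matrix n n ℂ) * hA.eigenvectorUnitary = 1 :=
    mem_unitaryGroup_iff'.mp hA.eigenvectorUnitary.2
  conv_lhs => rw [hA.spectral_theorem, Unitary.conjStarAlgAut_apply]
  rw [Matrix.trace_mul_cycle, hVV', one_mul, trace_diagonal]
  rfl

open scoped MatrixOrder in
lemma psd_sqrt_eq_cfc {A : Matrix n n ℂ} (hA : A.PosSemidef) : hA.sqrt = CFC.sqrt A := by
  have hA0 : 0 ≤ A := hA.nonneg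
  rw [CFC.sqrt_eq_cfc, cfc_nnreal_eq_real _ A, hA.1.cfc_eq]
  simp only [IsHermitian.cfc, Matrix.PosSemidef.sqrt, Unitary.conjStarAlgAut_apply]
  congr 3
  funext i
  simp [Real.coe_sqrt, Real.coe_toNNReal', hA.eigenvalues_nonneg i]

open scoped MatrixOrder in
lemma psd_eq_sqrt_of_sq_eq {A B : Matrix n n ℂ} (hB : B.PosSemidef) (hA : A.PosSemidef)
    (h : B ^ 2 = A) : B = hA.sqrt := by
  rw [psd_sqrt_eq_cfc, eq_comm]
  exact CFC.sqrt_unique (by rw [← sq]; exact h) hB.nonneg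

lemma traceNorm_hermitian {A : Matrix n n ℂ} (hA : A.IsHermitian) :
    traceNorm A = ∑ i, |hA.eigenvalues i| := by
  set V : Matrix n n ℂ := (hA.eigenvectorUnitary : Matrix n n ℂ) with hV
  have hVV' : star V * V = 1 := mem_unitaryGroup_iff'.mp hA.eigenvectorUnitary.2
  set D : Matrix n n ℂ := diagonal (fun i => ((|hA.eigenvalues i| : ℝ) : ℂ)) with hD
  have hB : PosSemidef (V * D * Vᴴ) := by
    have hDp : D.PosSemidef :=
      PosSemidef.diagonal (fun i => Complex.zero_le_real.2 (abs_nonneg _))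
    exact hDp.mul_mul_conjTranspose_same V
  have hsq : (V * D * Vᴴ) ^ 2 = Aᴴ * A := by
    have hstar : Vᴴ = star V := rfl
    rw [pow_two, hA.eq]
    conv_rhs => rw [hA.spectral_theorem, Unitary.conjStarAlgAut_apply]
    rw [hstar]
    rw [show V * D * star V * (V * D * star V)
        = V * (D * ((star V * V) * D)) * star V by noncomm_ring,
      show V * (diagonal (RCLike.ofReal ∘ hA.eigenvalues)) * star V
          * (V * (diagonal (RCLike.ofReal ∘ hA.eigenvalues)) * star V)
        = V * ((diagonal (RCLike.ofReal ∘ hA.eigenvalues))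
            * ((star V * V) * (diagonal (RCLike.ofReal ∘ hA.eigenvalues)))) * star V
        by noncomm_ring,
      hVV', one_mul, one_mul, hD, diagonal_mul_diagonal, diagonal_mul_diagonal]
    have hdiag : ((fun i => ((|hA.eigenvalues i| : ℝ) : ℂ) * ((|hA.eigenvalues i| : ℝ) : ℂ)))
        = fun i => ((RCLike.ofReal ∘ hA.eigenvalues) i * (RCLike.ofReal ∘ hA.eigenvalues) i) := by
      funext i
      simp only [Function.comp_apply, ← Complex.ofReal_mul, abs_mul_abs_self]
      norm_cast
    rw [hdiag]
  have hsqrt : V * D * Vᴴ = (Matrix.posSemidef_conjTranspose_mul_self A).sqrt :=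
    psd_eq_sqrt_of_sq_eq hB (Matrix.posSemidef_conjTranspose_mul_self A) hsq
  rw [traceNorm, ← hsqrt, Matrix.trace_mul_cycle, show Vᴴ = star V from rfl,
    hVV', one_mul, trace_diagonal]
  rw [← Complex.ofReal_sum]
  exact Complex.ofReal_re _


section Spectral

variable {ρ : Matrix n n ℂ} {ψ χ : n → ℂ}

lemma traceNorm_sub_outer_le (hρ : ρ.PosSemidef) (hR : (ρ - outer χ).PosSemidef)
    (htr : ρ.trace = 1) (hψ : nsq ψ = 1) (hχ : nsq χ ≤ 1) :
    traceNorm (ρ - outer ψ) ≤ 4 * Real.sqrt (nsq (ψ - χ)) := by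
  have hΔ : (ρ - outer ψ).IsHermitian := hρ.1.sub (outer_isHermitian ψ)
  set Δ := ρ - outer ψ with hΔdef
  set lam := hΔ.eigenvalues with hlam
  set v : n → (n → ℂ) := fun i => ⇑(hΔ.eigenvectorBasis i) with hv
  -- orthonormality in dot-product form
  have hdot : ∀ i j, star (v i) ⬝ᵥ v j = if i = j then 1 else 0 := by
    intro i j
    have h := orthonormal_iff_ite.mp hΔ.eigenvectorBasis.orthonormal i j
    rw [EuclideanSpace.inner_eq_star_dotProduct, dotProduct_comm] at h
    exact h
  have hunit : ∀ i, nsq (v i) = 1 := by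
    intro i
    have h := hdot i i
    rw [if_pos rfl, star_dot_self] at h
    exact_mod_cast h
  -- quadratic form at any vector
  have hq : ∀ w : n → ℂ, (star w ⬝ᵥ (Δ *ᵥ w)).re
      = (star w ⬝ᵥ (ρ *ᵥ w)).re - ‖star ψ ⬝ᵥ w‖ ^ 2 := by
    intro w
    rw [hΔdef, sub_mulVec, dotProduct_sub, dot_outer_self]
    simp [Complex.sub_re, ← Complex.ofReal_pow]
  have hqχ : ∀ w : n → ℂ, (‖star χ ⬝ᵥ w‖ : ℝ) ^ 2 ≤ (star w ⬝ᵥ (ρ *ᵥ w)).re := by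
    intro w
    have h := hR.dotProduct_mulVec_nonneg w
    rw [sub_mulVec, dotProduct_sub, dot_outer_self] at h
    rw [Complex.nonneg_iff] at h
    have h1 := h.1
    simpa [Complex.sub_re, ← Complex.ofReal_pow] using h1
  -- eigenvalue as quadratic form
  have heig : ∀ i, (star (v i) ⬝ᵥ (Δ *ᵥ v i)) = ((lam i : ℝ) : ℂ) := by
    intro i
    rw [hΔ.mulVec_eigenvectorBasis i]
    rw [show ((hΔ.eigenvalues i) • ⇑(hΔ.eigenvectorBasis i) : n → ℂ)
        = ((hΔ.eigenvalues i : ℂ)) • (v i) by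
      funext x; simp [hv, Complex.real_smul]]
    rw [dotProduct_smul, hdot i i, if_pos rfl, smul_eq_mul, mul_one]
  -- negative eigenvalues are bounded
  have key1 : ∀ i, lam i < 0 → -lam i ≤ 2 * Real.sqrt (nsq (ψ - χ)) := by
    intro i hi
    have ha : ‖star ψ ⬝ᵥ v i‖ ≤ 1 := by
      have := cs ψ (v i)
      rwa [hψ, hunit i, Real.sqrt_one, one_mul] at this
    have hb : ‖star χ ⬝ᵥ v i‖ ≤ 1 := by
      have h1 := cs χ (v i)
      rw [hunit i, Real.sqrt_one, mul_one] at h1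
      exact h1.trans (Real.sqrt_le_one.mpr hχ)
    have hab : ‖star ψ ⬝ᵥ v i - star χ ⬝ᵥ v i‖ ≤ Real.sqrt (nsq (ψ - χ)) := by
      have h1 : star ψ ⬝ᵥ v i - star χ ⬝ᵥ v i = star (ψ - χ) ⬝ᵥ v i := by
        rw [star_sub, sub_dotProduct]
      rw [h1]
      have h2 := cs (ψ - χ) (v i)
      rwa [hunit i, Real.sqrt_one, mul_one] at h2
    have hlami : lam i = (star (v i) ⬝ᵥ (ρ *ᵥ v i)).re - ‖star ψ ⬝ᵥ v i‖ ^ 2 := by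
      rw [← hq (v i), heig i, Complex.ofReal_re]
    have h3 := hqχ (v i)
    have h4 := norm_sub_norm_le (star ψ ⬝ᵥ v i) (star χ ⬝ᵥ v i)
    nlinarith [norm_nonneg (star ψ ⬝ᵥ v i), norm_nonneg (star χ ⬝ᵥ v i),
      Real.sqrt_nonneg (nsq (ψ - χ))]
  -- at most one negative eigenvalue
  have key2 : ∀ i j, lam i < 0 → lam j < 0 → i = j := by
    intro i j hi hj
    by_contra hij
    set ai := star ψ ⬝ᵥ v i with hai
    set aj := star ψ ⬝ᵥ v j with haj
    by_cases hzi : ai = 0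
    · -- use the eigenvector v i directly
      have h1 := hqχ (v i)
      have h2 : lam i = (star (v i) ⬝ᵥ (ρ *ᵥ v i)).re - ‖ai‖ ^ 2 := by
        rw [← hq (v i), heig i, Complex.ofReal_re]
      rw [hzi] at h2
      simp at h2
      nlinarith [sq_nonneg (‖star χ ⬝ᵥ v i‖)]
    · -- combination vector orthogonal to ψ
      set w : n → ℂ := aj • v i - ai • v j with hw
      have hworth : star ψ ⬝ᵥ w = 0 := by
        rw [hw, dotProduct_sub, dotProduct_smul, dotProduct_smul, ← hai, ← haj]
        simp [smul_eq_mul]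
        ring
      have hΔw : star w ⬝ᵥ (Δ *ᵥ w)
          = ((Complex.normSq aj * lam i + Complex.normSq ai * lam j : ℝ) : ℂ) := by
        rw [hw, mulVec_sub, mulVec_smul, mulVec_smul,
          hΔ.mulVec_eigenvectorBasis i, hΔ.mulVec_eigenvectorBasis j]
        have hsm : ∀ (c : ℂ) (r : ℝ) (u : n → ℂ), (c • (r • u) : n → ℂ) = (c * r) • u := by
          intro c r u; funext x; simp [Complex.real_smul]; ring
        rw [hsm, hsm]
        rw [star_sub, sub_dotProduct, dotProduct_sub, dotProduct_sub]
        rw [star_smul, star_smul, smul_dotProduct, smul_dotProduct,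
          smul_dotProduct, smul_dotProduct, dotProduct_smul, dotProduct_smul,
          dotProduct_smul, dotProduct_smul]
        rw [hdot i i, hdot i j, hdot j i, hdot j j]
        rw [if_pos rfl, if_pos rfl, if_neg hij, if_neg (fun h => hij h.symm)]
        simp only [smul_eq_mul, mul_zero, mul_one, sub_zero, zero_sub, star_mul',
          RCLike.star_def]
        rw [Complex.ofReal_add, Complex.ofReal_mul, Complex.ofReal_mul,
          Complex.normSq_eq_conj_mul_self, Complex.normSq_eq_conj_mul_self]
        rw [hlam]
        ring
      have hpos : 0 ≤ (star w ⬝ᵥ (ρ *ᵥ w)).re := hρ.re_dotProduct_nonneg w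
      have hq2 := hq w
      rw [hworth] at hq2
      simp only [norm_zero] at hq2
      rw [hΔw, Complex.ofReal_re] at hq2
      have hain : 0 < Complex.normSq ai := by
        rwa [Complex.normSq_pos]
      nlinarith [Complex.normSq_nonneg aj]
  -- assemble
  rw [traceNorm_hermitian hΔ]
  have htrΔ : Δ.trace = 0 := by
    rw [hΔdef, trace_sub, htr, trace_outer, hψ]
    simp
  have hsum0 : ∑ i, lam i = 0 := by
    have h := trace_eq_sum_eigenvalues hΔ
    rw [htrΔ] at h
    have : ((∑ i, lam i : ℝ) : ℂ) = 0 := by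
      rw [Complex.ofReal_sum]; exact h.symm
    exact_mod_cast this
  have habs : ∀ i, |lam i| = lam i + (if lam i < 0 then -2 * lam i else 0) := by
    intro i
    split_ifs with h
    · rw [abs_of_neg h]; ring
    · rw [abs_of_nonneg (not_lt.1 h)]; ring
  rw [Finset.sum_congr rfl (fun i _ => habs i), Finset.sum_add_distrib, hsum0, zero_add,
    Finset.sum_ite, Finset.sum_const_zero, add_zero]
  rcases (Finset.univ.filter (fun i => lam i < 0)).eq_empty_or_nonempty with h | h
  · rw [h, Finset.sum_empty]
    positivity
  · obtain ⟨j, hj⟩ := h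
    have hjneg : lam j < 0 := (Finset.mem_filter.1 hj).2
    have hS : Finset.univ.filter (fun i => lam i < 0) = {j} := by
      apply Finset.eq_singleton_iff_unique_mem.2
      exact ⟨hj, fun x hx => key2 x j (Finset.mem_filter.1 hx).2 hjneg⟩
    rw [hS, Finset.sum_singleton]
    have := key1 j hjneg
    linarith

end Spectral


section Oracle

variable {N M : ℕ} (k : Fin N)

lemma oracleHat_conjTranspose : (oracleHat (M := M) k)ᴴ = oracleHat k := by
  have hstar : (star fun x : Fin N × Fin M => if x.1 = k then (-1:ℂ) else 1)
      = fun x : Fin N × Fin M => if x.1 = k then (-1:ℂ) else 1 := by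
    funext x; by_cases h : x.1 = k <;> simp [h]
  rw [oracleHat, diagonal_conjTranspose, hstar]

lemma oracleHat_mul_self : oracleHat (M := M) k * oracleHat k = 1 := by
  rw [oracleHat, diagonal_mul_diagonal]
  rw [show (fun i : Fin N × Fin M => (if i.1 = k then (-1:ℂ) else 1)
      * if i.1 = k then (-1:ℂ) else 1) = fun _ => 1 by
    funext x; by_cases h : x.1 = k <;> simp [h]]
  exact diagonal_one

lemma oracleHat_mulVec (v : Fin N × Fin M → ℂ) :
    oracleHat k *ᵥ v = v - (2 : ℂ) • projVec k v := by
  funext x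
  simp only [oracleHat, mulVec_diagonal, Pi.sub_apply, Pi.smul_apply, projVec, smul_eq_mul]
  by_cases h : x.1 = k <;> simp [h] <;> ring

/-- variance/mixture identity for outer products -/
lemma outer_mix (p : ℝ) (v w : Fin N × Fin M → ℂ) :
    ((1 - p : ℝ) : ℂ) • outer v + (p : ℂ) • outer w
      - outer ((p : ℂ) • w + ((1 - p : ℝ) : ℂ) • v)
    = ((p * (1 - p) : ℝ) : ℂ) • outer (v - w) := by
  ext i j
  simp only [Matrix.sub_apply, Matrix.add_apply, Matrix.smul_apply, outer_apply, Pi.add_apply, Pi.smul_apply,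
    Pi.sub_apply, smul_eq_mul, map_add, _root_.map_mul, map_sub, Complex.conj_ofReal]
  push_cast
  ring

/-- The key step identity: the faulty oracle applied to `σ`, relative to the evolved
pure reference vector. -/
lemma faulty_step_identity (p : ℝ) (σ : Matrix (Fin N × Fin M) (Fin N × Fin M) ℂ)
    (w : Fin N × Fin M → ℂ) :
    faultyOracle p k σ - outer ((p : ℂ) • w + ((1 - p : ℝ) : ℂ) • (oracleHat k *ᵥ w))
    = ((1 - p : ℝ) : ℂ) • (oracleHat k * (σ - outer w) * (oracleHat k)ᴴ)
      + (p : ℂ) • (σ - outer w)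
      + ((p * (1 - p) : ℝ) : ℂ) • outer (oracleHat k *ᵥ w - w) := by
  have h1 : oracleHat (M := M) k * outer w * (oracleHat k)ᴴ = outer (oracleHat k *ᵥ w) :=
    outer_conj _ _
  rw [faultyOracle, Matrix.mul_sub, Matrix.sub_mul, smul_sub, smul_sub, h1, ← outer_mix p]
  abel

lemma faulty_posSemidef_step (p : ℝ) (hp0 : 0 ≤ p) (hp1 : p ≤ 1)
    {σ : Matrix (Fin N × Fin M) (Fin N × Fin M) ℂ} {w : Fin N × Fin M → ℂ}
    (h : (σ - outer w).PosSemidef) :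
    (faultyOracle p k σ
      - outer ((p : ℂ) • w + ((1 - p : ℝ) : ℂ) • (oracleHat k *ᵥ w))).PosSemidef := by
  rw [faulty_step_identity]
  refine PosSemidef.add (PosSemidef.add ?_ ?_) ?_
  · exact posSemidef_smul_real (h.mul_mul_conjTranspose_same (oracleHat k)) (by linarith)
  · exact posSemidef_smul_real h hp0
  · exact posSemidef_smul_real (outer_posSemidef _) (by nlinarith)

lemma trace_faultyOracle (p : ℝ) (σ : Matrix (Fin N × Fin M) (Fin N × Fin M) ℂ) :
    (faultyOracle p k σ).trace = σ.trace := by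
  rw [faultyOracle, trace_add, trace_smul, trace_smul, oracleHat_conjTranspose,
    Matrix.trace_mul_cycle, oracleHat_mul_self, one_mul]
  rw [smul_eq_mul, smul_eq_mul]
  push_cast
  ring

end Oracle


section Vec

lemma norm_sq_complex (z : ℂ) : ‖z‖ ^ 2 = z.re ^ 2 + z.im ^ 2 := by
  rw [Complex.sq_norm, Complex.normSq_apply]; ring

lemma nsq_add_smul (c : ℝ) (u w : n → ℂ) :
    nsq (u + (c : ℂ) • w) = nsq u + 2 * c * (star u ⬝ᵥ w).re + c ^ 2 * nsq w := by
  have hre : (star u ⬝ᵥ w).re = ∑ i, ((u i).re * (w i).re + (u i).im * (w i).im) := by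
    rw [dotProduct, Complex.re_sum]
    refine Finset.sum_congr rfl fun i _ => ?_
    simp [Complex.mul_re]
  unfold nsq
  rw [hre, Finset.mul_sum, Finset.mul_sum, ← Finset.sum_add_distrib, ← Finset.sum_add_distrib]
  refine Finset.sum_congr rfl fun i _ => ?_
  simp only [Pi.add_apply, Pi.smul_apply, smul_eq_mul, norm_sq_complex, Complex.add_re,
    Complex.add_im, Complex.mul_re, Complex.mul_im, Complex.ofReal_re, Complex.ofReal_im]
  ring

lemma dot_mulVec_unitary {U : Matrix n n ℂ} (hU : U ∈ Matrix.unitaryGroup n ℂ)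
    (u w : n → ℂ) : star (U *ᵥ u) ⬝ᵥ (U *ᵥ w) = star u ⬝ᵥ w := by
  rw [star_mulVec, dotProduct_mulVec, vecMul_vecMul, ← Matrix.star_eq_conjTranspose,
    mem_unitaryGroup_iff'.mp hU, vecMul_one]

lemma nsq_mulVec_unitary {U : Matrix n n ℂ} (hU : U ∈ Matrix.unitaryGroup n ℂ)
    (u : n → ℂ) : nsq (U *ᵥ u) = nsq u := by
  have h := dot_mulVec_unitary hU u u
  rw [star_dot_self, star_dot_self] at h
  exact_mod_cast h

lemma trace_conj_unitary {U : Matrix n n ℂ} (hU : U ∈ Matrix.unitaryGroup n ℂ)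
    (A : Matrix n n ℂ) : (U * A * Uᴴ).trace = A.trace := by
  rw [Matrix.trace_mul_cycle, ← Matrix.star_eq_conjTranspose,
    mem_unitaryGroup_iff'.mp hU, one_mul]

end Vec

section Proj

variable {N M : ℕ}

lemma proj_dot (k : Fin N) (u w : Fin N × Fin M → ℂ) :
    star u ⬝ᵥ projVec k w = star (projVec k u) ⬝ᵥ projVec k w := by
  refine Finset.sum_congr rfl fun x _ => ?_
  by_cases h : x.1 = k <;> simp [projVec, h]

lemma proj_sub (k : Fin N) (u w : Fin N × Fin M → ℂ) :
    projVec k (u - w) = projVec k u - projVec k w := by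
  funext x
  by_cases h : x.1 = k <;> simp [projVec, h]

lemma proj_dot_self (k : Fin N) (w : Fin N × Fin M → ℂ) :
    star w ⬝ᵥ projVec k w = ((nsq (projVec k w) : ℝ) : ℂ) := by
  rw [proj_dot, star_dot_self]

lemma sum_nsq_proj (v : Fin N × Fin M → ℂ) : ∑ k, nsq (projVec k v) = nsq v := by
  unfold nsq
  rw [Finset.sum_comm]
  refine Finset.sum_congr rfl fun x _ => ?_
  rw [show (fun k => ‖projVec k v x‖ ^ 2) = fun k => if x.1 = k then ‖v x‖ ^ 2 else 0 by
    funext k; by_cases h : x.1 = k <;> simp [projVec, h]]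
  simp

end Proj

section Seq

variable {N M : ℕ}

noncomputable def psiSeq (U : ℕ → Matrix (Fin N × Fin M) (Fin N × Fin M) ℂ)
    (ψ₀ : Fin N × Fin M → ℂ) : ℕ → (Fin N × Fin M → ℂ)
  | 0 => ψ₀
  | t + 1 => U t *ᵥ psiSeq U ψ₀ t

noncomputable def chiSeq (p : ℝ) (k : Fin N)
    (U : ℕ → Matrix (Fin N × Fin M) (Fin N × Fin M) ℂ)
    (ψ₀ : Fin N × Fin M → ℂ) : ℕ → (Fin N × Fin M → ℂ)
  | 0 => ψ₀
  | t + 1 => (p : ℂ) • (U t *ᵥ chiSeq p k U ψ₀ t)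
      + ((1 - p : ℝ) : ℂ) • (oracleHat k *ᵥ (U t *ᵥ chiSeq p k U ψ₀ t))

lemma chiSeq_succ_eq (p : ℝ) (k : Fin N)
    (U : ℕ → Matrix (Fin N × Fin M) (Fin N × Fin M) ℂ)
    (ψ₀ : Fin N × Fin M → ℂ) (t : ℕ) :
    chiSeq p k U ψ₀ (t + 1)
      = (U t *ᵥ chiSeq p k U ψ₀ t)
        + ((-(2 * (1 - p)) : ℝ) : ℂ) • projVec k (U t *ᵥ chiSeq p k U ψ₀ t) := by
  rw [chiSeq, oracleHat_mulVec]
  funext x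
  simp only [Pi.add_apply, Pi.smul_apply, Pi.sub_apply, smul_eq_mul]
  push_cast
  ring

end Seq

end FG

open FG

/-- Main theorem: any quantum query algorithm whose final states under the
`p`-faulty oracles are 9/10-far in trace distance from the fault-free final
state, for every marked element `k`, must make `T > (p/(10(1-p)))·N` queries. -/
theorem faulty_grover_lower_bound {N M T : ℕ} (p : ℝ) (hp0 : 0 < p) (hp1 : p < 1)
    (U : ℕ → Matrix (Fin N × Fin M) (Fin N × Fin M) ℂ)
    (hU : ∀ t, U t ∈ Matrix.unitaryGroup (Fin N × Fin M) ℂ)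
    (ψ₀ : Fin N × Fin M → ℂ) (hψ₀ : ∑ x, ‖ψ₀ x‖ ^ 2 = 1)
    (ρ ρhat : Fin N → ℕ → Matrix (Fin N × Fin M) (Fin N × Fin M) ℂ)
    (ρ₀ ρ₀hat : ℕ → Matrix (Fin N × Fin M) (Fin N × Fin M) ℂ)
    (hρhat0 : ∀ k, ρhat k 0 = outer ψ₀)
    (hρ : ∀ k t, ρ k t = U t * ρhat k t * (U t)ᴴ)
    (hρhatS : ∀ k t, ρhat k (t + 1) = faultyOracle p k (ρ k t))
    (hρ₀hat0 : ρ₀hat 0 = outer ψ₀)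
    (hρ₀ : ∀ t, ρ₀ t = U t * ρ₀hat t * (U t)ᴴ)
    (hρ₀hatS : ∀ t, ρ₀hat (t + 1) = ρ₀ t)
    (hdist : ∀ k, (1 / 2) * traceNorm (ρ k T - ρ₀ T) ≥ 9 / 10) :
    (T : ℝ) > (p / (10 * (1 - p))) * N := by
  classical
  have hp1' : (0 : ℝ) < 1 - p := by linarith
  -- the state space is nonempty, hence `N ≥ 1`
  have huniv : (Finset.univ : Finset (Fin N × Fin M)).Nonempty := by
    rcases (Finset.univ (α := Fin N × Fin M)).eq_empty_or_nonempty with h | h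
    · rw [h, Finset.sum_empty] at hψ₀; norm_num at hψ₀
    · exact h
  obtain ⟨x0, -⟩ := huniv
  have hN1 : (1 : ℝ) ≤ N := by
    have : (1 : ℕ) ≤ N := x0.1.pos
    exact_mod_cast this
  -- the reference (oracle-free) pure state trajectory
  have hψnsq : ∀ t, nsq (psiSeq U ψ₀ t) = 1 := by
    intro t
    induction t with
    | zero => simpa [psiSeq, nsq] using hψ₀
    | succ t ih => rw [psiSeq, nsq_mulVec_unitary (hU t)]; exact ih
  have hρ₀hatT : ∀ t, ρ₀hat t = outer (psiSeq U ψ₀ t) := by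
    intro t
    induction t with
    | zero => rw [hρ₀hat0]; rfl
    | succ t ih =>
      rw [hρ₀hatS, hρ₀, ih, outer_conj]
      rfl
  have hρ₀T : ∀ t, ρ₀ t = outer (psiSeq U ψ₀ (t + 1)) := by
    intro t
    rw [hρ₀, hρ₀hatT, outer_conj]
    rfl
  -- the faulty-oracle evolution dominates the averaged pure trajectory
  have hRk : ∀ (k : Fin N) (t : ℕ),
      (ρhat k t - outer (chiSeq p k U ψ₀ t)).PosSemidef := by
    intro k t
    induction t with
    | zero =>
      rw [hρhat0, show chiSeq p k U ψ₀ 0 = ψ₀ from rfl, sub_self]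
      exact Matrix.PosSemidef.zero
    | succ t ih =>
      have hconj : ρ k t - outer (U t *ᵥ chiSeq p k U ψ₀ t)
          = U t * (ρhat k t - outer (chiSeq p k U ψ₀ t)) * (U t)ᴴ := by
        rw [hρ, Matrix.mul_sub, Matrix.sub_mul, outer_conj]
      have hps : (ρ k t - outer (U t *ᵥ chiSeq p k U ψ₀ t)).PosSemidef := by
        rw [hconj]; exact ih.mul_mul_conjTranspose_same (U t)
      have := faulty_posSemidef_step k p hp0.le hp1.le hps
      rw [hρhatS]
      exact this
  have hρhatPSD : ∀ (k : Fin N) (t : ℕ), (ρhat k t).PosSemidef := by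
    intro k t
    have := (hRk k t).add (outer_posSemidef (chiSeq p k U ψ₀ t))
    rwa [sub_add_cancel] at this
  have htrk : ∀ (k : Fin N) (t : ℕ), (ρhat k t).trace = 1 := by
    intro k t
    induction t with
    | zero =>
      rw [hρhat0, trace_outer]
      rw [show nsq ψ₀ = 1 from hψ₀]
      norm_num
    | succ t ih =>
      rw [hρhatS, trace_faultyOracle, hρ, trace_conj_unitary (hU t)]
      exact ih
  -- the averaged trajectory stays inside the unit ball
  have hχnsq : ∀ (k : Fin N) (t : ℕ), nsq (chiSeq p k U ψ₀ t) ≤ 1 := by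
    intro k t
    induction t with
    | zero => exact le_of_eq (by simpa [chiSeq, nsq] using hψ₀)
    | succ t ih =>
      rw [chiSeq_succ_eq, nsq_add_smul]
      set b := U t *ᵥ chiSeq p k U ψ₀ t with hb
      have hbn : nsq b = nsq (chiSeq p k U ψ₀ t) := nsq_mulVec_unitary (hU t) _
      have hre : (star b ⬝ᵥ projVec k b).re = nsq (projVec k b) := by
        rw [proj_dot_self]; exact Complex.ofReal_re _
      rw [hre, hbn]
      nlinarith [mul_nonneg (mul_nonneg hp0.le hp1'.le) (nsq_nonneg (projVec k b)), ih]
  -- one-step inequality for the deviation vector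
  have hstep : ∀ (k : Fin N) (t : ℕ),
      nsq (psiSeq U ψ₀ (t + 1) - chiSeq p k U ψ₀ (t + 1))
        ≤ nsq (psiSeq U ψ₀ t - chiSeq p k U ψ₀ t)
          + ((1 - p) / p) * nsq (projVec k (U t *ᵥ psiSeq U ψ₀ t)) := by
    intro k t
    set a := U t *ᵥ psiSeq U ψ₀ t with ha
    set b := U t *ᵥ chiSeq p k U ψ₀ t with hb
    have hvec : psiSeq U ψ₀ (t + 1) - chiSeq p k U ψ₀ (t + 1)
        = (a - b) + ((2 * (1 - p) : ℝ) : ℂ) • projVec k b := by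
      rw [show psiSeq U ψ₀ (t + 1) = a from rfl, chiSeq_succ_eq]
      funext x
      simp only [Pi.add_apply, Pi.sub_apply, Pi.smul_apply, smul_eq_mul]
      push_cast
      ring
    rw [hvec, nsq_add_smul]
    have hsplit : (star (a - b) ⬝ᵥ projVec k b).re
        = (star (projVec k a) ⬝ᵥ projVec k b).re - nsq (projVec k b) := by
      rw [proj_dot k (a - b), proj_sub, star_sub, sub_dotProduct, ← proj_dot k b,
        proj_dot_self]
      simp [Complex.sub_re]
    rw [hsplit]
    have hnab : nsq (a - b) = nsq (psiSeq U ψ₀ t - chiSeq p k U ψ₀ t) := by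
      rw [ha, hb, ← Matrix.mulVec_sub]
      exact nsq_mulVec_unitary (hU t) _
    rw [hnab]
    -- Cauchy-Schwarz and AM-GM
    set x := Real.sqrt (nsq (projVec k a)) with hx
    set y := Real.sqrt (nsq (projVec k b)) with hy
    have hx2 : x ^ 2 = nsq (projVec k a) := Real.sq_sqrt (nsq_nonneg _)
    have hy2 : y ^ 2 = nsq (projVec k b) := Real.sq_sqrt (nsq_nonneg _)
    have hcs : (star (projVec k a) ⬝ᵥ projVec k b).re ≤ x * y := by
      calc (star (projVec k a) ⬝ᵥ projVec k b).re
          ≤ ‖star (projVec k a) ⬝ᵥ projVec k b‖ := Complex.re_le_norm _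
        _ ≤ x * y := cs _ _
    have hamgm : 4 * (1 - p) * (x * y) ≤ ((1 - p) / p) * x ^ 2 + 4 * p * (1 - p) * y ^ 2 := by
      have h0 := mul_nonneg (div_nonneg hp1'.le hp0.le) (sq_nonneg (x - 2 * p * y))
      have hkey : ((1 - p) / p) * (x - 2 * p * y) ^ 2
          = ((1 - p) / p) * x ^ 2 - 4 * (1 - p) * (x * y) + 4 * p * (1 - p) * y ^ 2 := by
        field_simp
        ring
      linarith [h0, hkey.symm.le, hkey.le]
    rw [← hx2, ← hy2]
    have h6 : 4 * (1 - p) * ((star (projVec k a) ⬝ᵥ projVec k b).re) ≤ 4 * (1 - p) * (x * y) :=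
      mul_le_mul_of_nonneg_left hcs (by linarith)
    nlinarith [h6, hamgm]
  -- telescoping
  have htel : ∀ (k : Fin N) (s : ℕ),
      nsq (psiSeq U ψ₀ s - chiSeq p k U ψ₀ s)
        ≤ ((1 - p) / p) * ∑ t ∈ Finset.range s, nsq (projVec k (U t *ᵥ psiSeq U ψ₀ t)) := by
    intro k s
    induction s with
    | zero =>
      simp only [Finset.range_zero, Finset.sum_empty, mul_zero]
      have h0 : psiSeq U ψ₀ 0 - chiSeq p k U ψ₀ 0 = 0 := sub_self ψ₀
      rw [h0]
      simp [nsq]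
    | succ s ih =>
      calc nsq (psiSeq U ψ₀ (s + 1) - chiSeq p k U ψ₀ (s + 1))
          ≤ nsq (psiSeq U ψ₀ s - chiSeq p k U ψ₀ s)
            + ((1 - p) / p) * nsq (projVec k (U s *ᵥ psiSeq U ψ₀ s)) := hstep k s
        _ ≤ ((1 - p) / p) * ∑ t ∈ Finset.range s, nsq (projVec k (U t *ᵥ psiSeq U ψ₀ t))
            + ((1 - p) / p) * nsq (projVec k (U s *ᵥ psiSeq U ψ₀ s)) := by linarith
        _ = ((1 - p) / p) * ∑ t ∈ Finset.range (s + 1),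
              nsq (projVec k (U t *ᵥ psiSeq U ψ₀ t)) := by
            rw [Finset.sum_range_succ, mul_add]
  -- per-oracle lower bound on the query mass
  have hSk : ∀ k : Fin N, (81 : ℝ) / 400 * (p / (1 - p))
      ≤ ∑ t ∈ Finset.range T, nsq (projVec k (U t *ᵥ psiSeq U ψ₀ t)) := by
    intro k
    -- apply the spectral lemma at time T
    have hχT : nsq (U T *ᵥ chiSeq p k U ψ₀ T) ≤ 1 := by
      rw [nsq_mulVec_unitary (hU T)]; exact hχnsq k T
    have hRT : (ρ k T - outer (U T *ᵥ chiSeq p k U ψ₀ T)).PosSemidef := by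
      have hconj : ρ k T - outer (U T *ᵥ chiSeq p k U ψ₀ T)
          = U T * (ρhat k T - outer (chiSeq p k U ψ₀ T)) * (U T)ᴴ := by
        rw [hρ, Matrix.mul_sub, Matrix.sub_mul, outer_conj]
      rw [hconj]
      exact (hRk k T).mul_mul_conjTranspose_same (U T)
    have hPSD : (ρ k T).PosSemidef := by
      rw [hρ]
      exact (hρhatPSD k T).mul_mul_conjTranspose_same (U T)
    have htrT : (ρ k T).trace = 1 := by
      rw [hρ, trace_conj_unitary (hU T)]
      exact htrk k T
    have hbound := traceNorm_sub_outer_le hPSD hRT htrT (hψnsq (T + 1)) hχT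
    rw [← hρ₀T T] at hbound
    have hd := hdist k
    have htn : (9 : ℝ) / 5 ≤ traceNorm (ρ k T - ρ₀ T) := by linarith
    have h4 : (9 : ℝ) / 5
        ≤ 4 * Real.sqrt (nsq (psiSeq U ψ₀ (T + 1) - U T *ᵥ chiSeq p k U ψ₀ T)) :=
      le_trans htn hbound
    have hX : nsq (psiSeq U ψ₀ (T + 1) - U T *ᵥ chiSeq p k U ψ₀ T)
        = nsq (psiSeq U ψ₀ T - chiSeq p k U ψ₀ T) := by
      rw [show psiSeq U ψ₀ (T + 1) = U T *ᵥ psiSeq U ψ₀ T from rfl, ← Matrix.mulVec_sub]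
      exact nsq_mulVec_unitary (hU T) _
    rw [hX] at h4
    set X := nsq (psiSeq U ψ₀ T - chiSeq p k U ψ₀ T) with hXd
    have hX81 : (81 : ℝ) / 400 ≤ X := by
      have hs : (9 : ℝ) / 20 ≤ Real.sqrt X := by linarith
      have := Real.sq_sqrt (nsq_nonneg (psiSeq U ψ₀ T - chiSeq p k U ψ₀ T))
      nlinarith [Real.sqrt_nonneg X]
    have hXle := htel k T
    rw [← hXd] at hXle
    have hfrac : (81 : ℝ) / 400 ≤ ((1 - p) / p)
        * ∑ t ∈ Finset.range T, nsq (projVec k (U t *ᵥ psiSeq U ψ₀ t)) :=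
      le_trans hX81 hXle
    calc (81 : ℝ) / 400 * (p / (1 - p))
        ≤ (((1 - p) / p) * ∑ t ∈ Finset.range T,
            nsq (projVec k (U t *ᵥ psiSeq U ψ₀ t))) * (p / (1 - p)) :=
          mul_le_mul_of_nonneg_right hfrac (le_of_lt (div_pos hp0 hp1'))
      _ = ∑ t ∈ Finset.range T, nsq (projVec k (U t *ᵥ psiSeq U ψ₀ t)) := by
          field_simp
  -- total query mass equals T
  have hsumT : ∑ k : Fin N, ∑ t ∈ Finset.range T,
      nsq (projVec k (U t *ᵥ psiSeq U ψ₀ t)) = T := by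
    rw [Finset.sum_comm]
    have : ∀ t ∈ Finset.range T,
        ∑ k : Fin N, nsq (projVec k (U t *ᵥ psiSeq U ψ₀ t)) = 1 := by
      intro t _
      rw [sum_nsq_proj]
      exact hψnsq (t + 1)
    rw [Finset.sum_congr rfl this, Finset.sum_const, Finset.card_range, nsmul_eq_mul, mul_one]
  -- sum the per-oracle bounds
  have hlow : (N : ℝ) * ((81 : ℝ) / 400 * (p / (1 - p))) ≤ T := by
    rw [← hsumT]
    have := Finset.card_nsmul_le_sum Finset.univ
      (fun k : Fin N => ∑ t ∈ Finset.range T, nsq (projVec k (U t *ᵥ psiSeq U ψ₀ t)))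
      ((81 : ℝ) / 400 * (p / (1 - p))) (fun k _ => hSk k)
    simpa [Finset.card_univ, nsmul_eq_mul] using this
  have hpq : 0 < p / (1 - p) := div_pos hp0 hp1'
  have hkey : (p / (10 * (1 - p))) * N < (N : ℝ) * ((81 : ℝ) / 400 * (p / (1 - p))) := by
    rw [show (p / (10 * (1 - p))) * N = (N : ℝ) * ((1 : ℝ) / 10 * (p / (1 - p))) by
      field_simp]
    apply mul_lt_mul_of_pos_left _ (by linarith : (0:ℝ) < N)
    nlinarith [hpq]
  linarith
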